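/- arXiv:math/0112308 — 4 statements merged into one kernel-verified Lean document; each statement's English description precedes it below -/
import Mathlib

section
/- Let M be an m×n real matrix, and let d ∈ ℝ^m and e ∈ ℝ^n satisfy Σ_{k=1}^n |m_{ik}| ≤ d_i for every i and Σ_{i=1}^m |m_{ik}| ≤ e_k for every k. Then for all vectors x ∈ ℝ^m and y ∈ ℝ^n with nonnegative entries, |xᵀMy| ≤ sqrt( Σ_i d_i x_i² ) · sqrt( Σ_k e_k y_k² ). -/
/-- If the absolute row sums of an `m × n` real matrix `M` are
bounded by `d` and its absolute column sums are bounded by `e`, then for all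
nonnegative vectors `x ∈ ℝ^m`, `y ∈ ℝ^n`,
`|xᵀMy| ≤ sqrt (Σ_i d_i x_i²) * sqrt (Σ_k e_k y_k²)`. -/
theorem stmt2 (m n : ℕ) (M : Matrix (Fin m) (Fin n) ℝ)
    (d : Fin m → ℝ) (e : Fin n → ℝ)
    (hd : ∀ i, ∑ k, |M i k| ≤ d i) (he : ∀ k, ∑ i, |M i k| ≤ e k)
    (x : Fin m → ℝ) (y : Fin n → ℝ)
    (hx : ∀ i, 0 ≤ x i) (hy : ∀ k, 0 ≤ y k) :
    |∑ i, ∑ k, x i * M i k * y k| ≤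
      Real.sqrt (∑ i, d i * x i ^ 2) * Real.sqrt (∑ k, e k * y k ^ 2) := by
  set f : Fin m × Fin n → ℝ := fun p => Real.sqrt |M p.1 p.2| * x p.1 with hf
  set g : Fin m × Fin n → ℝ := fun p => Real.sqrt |M p.1 p.2| * y p.2 with hg
  have hMnn : ∀ i k, (0:ℝ) ≤ |M i k| := fun i k => abs_nonneg _
  have hfg : ∀ p : Fin m × Fin n, f p * g p = |M p.1 p.2| * (x p.1 * y p.2) := by
    intro p
    simp only [hf, hg]
    rw [show Real.sqrt |M p.1 p.2| * x p.1 * (Real.sqrt |M p.1 p.2| * y p.2)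
        = (Real.sqrt |M p.1 p.2| * Real.sqrt |M p.1 p.2|) * (x p.1 * y p.2) by ring,
      Real.mul_self_sqrt (hMnn _ _)]
  -- step 1: bound abs by sum of absolute values
  have h1 : |∑ i, ∑ k, x i * M i k * y k| ≤ ∑ p : Fin m × Fin n, f p * g p := by
    have heq : ∑ p : Fin m × Fin n, f p * g p = ∑ i, ∑ k, |x i * M i k * y k| := by
      rw [Fintype.sum_prod_type]
      refine Finset.sum_congr rfl fun i _ => Finset.sum_congr rfl fun k _ => ?_
      rw [hfg (i, k), abs_mul, abs_mul, abs_of_nonneg (hx i), abs_of_nonneg (hy k)]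
      ring
    rw [heq]
    exact (Finset.abs_sum_le_sum_abs _ _).trans
      (Finset.sum_le_sum fun i _ => Finset.abs_sum_le_sum_abs _ _)
  -- step 2: Cauchy–Schwarz
  have hfgnn : (0:ℝ) ≤ ∑ p : Fin m × Fin n, f p * g p := by
    refine Finset.sum_nonneg fun p _ => mul_nonneg ?_ ?_ <;>
      exact mul_nonneg (Real.sqrt_nonneg _) (by first | exact hx p.1 | exact hy p.2)
  have hcs : (∑ p : Fin m × Fin n, f p * g p)
      ≤ Real.sqrt (∑ p : Fin m × Fin n, f p ^ 2) *
        Real.sqrt (∑ p : Fin m × Fin n, g p ^ 2) := by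
    have h := Finset.sum_mul_sq_le_sq_mul_sq Finset.univ f g
    calc ∑ p : Fin m × Fin n, f p * g p
        = Real.sqrt ((∑ p : Fin m × Fin n, f p * g p) ^ 2) := by
          rw [Real.sqrt_sq hfgnn]
      _ ≤ Real.sqrt ((∑ p : Fin m × Fin n, f p ^ 2) * (∑ p : Fin m × Fin n, g p ^ 2)) :=
          Real.sqrt_le_sqrt h
      _ = _ := Real.sqrt_mul (Finset.sum_nonneg fun p _ => sq_nonneg _) _
  -- step 3: bound the two sums
  have hfsum : ∑ p : Fin m × Fin n, f p ^ 2 ≤ ∑ i, d i * x i ^ 2 := by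
    rw [Fintype.sum_prod_type]
    refine Finset.sum_le_sum fun i _ => ?_
    have : ∀ k, f (i, k) ^ 2 = |M i k| * x i ^ 2 := by
      intro k
      simp only [hf, mul_pow, Real.sq_sqrt (hMnn i k)]
    simp_rw [this, ← Finset.sum_mul]
    exact mul_le_mul_of_nonneg_right (hd i) (sq_nonneg _)
  have hgsum : ∑ p : Fin m × Fin n, g p ^ 2 ≤ ∑ k, e k * y k ^ 2 := by
    rw [Fintype.sum_prod_type_right]
    refine Finset.sum_le_sum fun k _ => ?_
    have : ∀ i, g (i, k) ^ 2 = |M i k| * y k ^ 2 := by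
      intro i
      simp only [hg, mul_pow, Real.sq_sqrt (hMnn i k)]
    simp_rw [this, ← Finset.sum_mul]
    exact mul_le_mul_of_nonneg_right (he k) (sq_nonneg _)
  refine h1.trans (hcs.trans ?_)
  exact mul_le_mul (Real.sqrt_le_sqrt hfsum) (Real.sqrt_le_sqrt hgsum)
    (Real.sqrt_nonneg _) (Real.sqrt_nonneg _)
end

section
/- Let X = (V, W, b, k) be a labelled graph and let (a, γ) be a solution of the BKN-equation over X with a not identically zero, a_v ≥ 0 for all v ∈ V, |γ_w| ≤ 1 for all w ∈ W, and γ_w γ_{-w} ≠ -1 for all w ∈ W. Define γ' : W → ℚ by γ'_w = γ_w if a_{w⁻} · a_{w⁺} ≠ 0, and γ'_w = 0 if a_{w⁻} · a_{w⁺} = 0. Then (a, γ') is again a solution of the BKN-equation over X with a not identically zero, a_v ≥ 0 for all v, |γ'_w| ≤ 1 for all w, and γ'_w γ'_{-w} ≠ -1 for all w; moreover γ'_w = 0 whenever a_{w⁻} a_{w⁺} = 0. -/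
open Finset

/-- Let `X = (V, W, b, k)` be a labelled graph (finite vertex
set `V`, finite set `W` of edge-ends with a fixed-point-free involution `neg`,
initial-vertex map `ini` (the terminal vertex of `w` is `ini (neg w)`),
labels `b : W → ℤ∖{0}` with `b (neg w) = b w`, charges `k : V → ℚ`).
If `(a, γ)` is a solution of the BKN-equation
`Σ_{w ∈ ∂v} γ_w a_{w⁺} / b_w = k_v a_v` with `a ≢ 0`, `a ≥ 0`, `|γ| ≤ 1` and
`γ_w γ_{-w} ≠ -1`, then replacing `γ_w` by `0` whenever `a_{w⁻} a_{w⁺} = 0`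
again yields such a solution, which moreover vanishes on those edge-ends. -/
theorem stmt4 {V W : Type*} [Fintype V] [Fintype W] [DecidableEq V]
    (neg : W → W) (hinv : ∀ w, neg (neg w) = w) (hfpf : ∀ w, neg w ≠ w)
    (ini : W → V)
    (b : W → ℤ) (hb : ∀ w, b w ≠ 0) (hbneg : ∀ w, b (neg w) = b w)
    (k : V → ℚ)
    (a : V → ℚ) (γ : W → ℚ)
    (hsol : ∀ v, ∑ w ∈ univ.filter (fun w => ini w = v),
        γ w * a (ini (neg w)) / (b w : ℚ) = k v * a v)
    (ha_ne : a ≠ 0) (ha_nn : ∀ v, 0 ≤ a v)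
    (hγ : ∀ w, |γ w| ≤ 1) (hγγ : ∀ w, γ w * γ (neg w) ≠ -1) :
    let γ' : W → ℚ := fun w => if a (ini w) * a (ini (neg w)) = 0 then 0 else γ w
    (∀ v, ∑ w ∈ univ.filter (fun w => ini w = v),
        γ' w * a (ini (neg w)) / (b w : ℚ) = k v * a v) ∧
      a ≠ 0 ∧ (∀ v, 0 ≤ a v) ∧
      (∀ w, |γ' w| ≤ 1) ∧ (∀ w, γ' w * γ' (neg w) ≠ -1) ∧
      (∀ w, a (ini w) * a (ini (neg w)) = 0 → γ' w = 0) := by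
  intro γ'
  have hγ'def : ∀ w, γ' w = if a (ini w) * a (ini (neg w)) = 0 then 0 else γ w :=
    fun w => rfl
  refine ⟨?_, ha_ne, ha_nn, ?_, ?_, ?_⟩
  · intro v
    by_cases hv : a v = 0
    · rw [hv, mul_zero]
      apply Finset.sum_eq_zero
      intro w hw
      simp only [mem_filter] at hw
      have : a (ini w) * a (ini (neg w)) = 0 := by rw [hw.2, hv, zero_mul]
      rw [hγ'def, if_pos this, zero_mul, zero_div]
    · rw [← hsol v]
      apply Finset.sum_congr rfl
      intro w hw
      simp only [mem_filter] at hw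
      by_cases h : a (ini w) * a (ini (neg w)) = 0
      · have h0 : a (ini (neg w)) = 0 := by
          rcases mul_eq_zero.mp h with h0 | h0
          · exact absurd (hw.2 ▸ h0) hv
          · exact h0
        rw [hγ'def, if_pos h, h0, mul_zero, mul_zero]
      · rw [hγ'def, if_neg h]
  · intro w
    rw [hγ'def]
    split
    · simp
    · exact hγ w
  · intro w
    have hsym : a (ini (neg w)) * a (ini (neg (neg w))) = 0 ↔
        a (ini w) * a (ini (neg w)) = 0 := by rw [hinv, mul_comm]
    rw [hγ'def, hγ'def]
    by_cases h : a (ini w) * a (ini (neg w)) = 0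
    · rw [if_pos h, zero_mul]; norm_num
    · rw [if_neg h, if_neg (fun hc => h (hsym.mp hc))]
      exact hγγ w
  · intro w h
    rw [hγ'def, if_pos h]
end

section
/- Let X̂ = (V̂, Ŵ, b̂, k̂) and X = (V, W, b, k) be labelled graphs (with rational labels k and nonzero integer labels b), and let q : X̂ → X be a covering of labelled graphs with local degrees d : V̂ → ℤ_{>0}; that is: q maps V̂ onto V and Ŵ to W with q(-l) = -q(l) and q(l⁻) = q(l)⁻ for all l ∈ Ŵ; for every u ∈ V̂ and every w ∈ ∂q(u) the number of edge-ends l ∈ ∂u with q(l) = w equals d_u; k̂_u = k_{q(u)} · d_u for all u ∈ V̂; and b̂_l = b_{q(l)} for all l ∈ Ŵ. Suppose x : V̂ → ℝ and μ : Ŵ → ℝ satisfy the real BKN-equation over X̂, with x_u ≥ 0 for all u, x not identically zero, |μ_l| ≤ 1 for all l, and μ_{-l} = μ_l for all l. Then there exist t : V → ℝ and λ : W → ℝ satisfying the real BKN-equation over X, with t_v ≥ 0 for all v, t not identically zero, |λ_w| ≤ 1 for all w, and λ_{-w} = λ_w for all w. Moreover, if x_u > 0 for every u ∈ V̂, then t_v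 > 0 for every v ∈ V. -/
open Finset

set_option maxHeartbeats 1000000

/-- Descent of real BKN-solutions under a covering of labelled
graphs. `q = (qV, qW)` is a covering of the labelled graph `X = (V, W, b, k)`
by `X̂ = (V̂, Ŵ, b̂, k̂)` with local degrees `d : V̂ → ℤ_{>0}`: `qV` is onto,
`q` commutes with the involutions and initial-vertex maps, over each
`w ∈ ∂ (qV u)` there are exactly `d u` edge-ends in `∂u`, `k̂_u = k_{qV u} d_u`
and `b̂_l = b_{qW l}`. If `(x, μ)` solves the real BKN-equation over `X̂` with
`x ≥ 0`, `x ≢ 0`, `|μ| ≤ 1`, `μ_{-l} = μ_l`, then there is a solution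
`(t, λ)` of the real BKN-equation over `X` with `t ≥ 0`, `t ≢ 0`, `|λ| ≤ 1`,
`λ_{-w} = λ_w`; moreover if `x > 0` everywhere then `t > 0` everywhere. -/
theorem stmt6 {V W Vh Wh : Type*}
    [Fintype V] [Fintype W] [Fintype Vh] [Fintype Wh]
    [DecidableEq V] [DecidableEq W] [DecidableEq Vh]
    -- the base labelled graph X
    (neg : W → W) (hinv : ∀ w, neg (neg w) = w) (hfpf : ∀ w, neg w ≠ w)
    (ini : W → V)
    (b : W → ℤ) (hb : ∀ w, b w ≠ 0) (hbneg : ∀ w, b (neg w) = b w)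
    (k : V → ℚ)
    -- the covering labelled graph X̂
    (negh : Wh → Wh) (hinvh : ∀ l, negh (negh l) = l) (hfpfh : ∀ l, negh l ≠ l)
    (inih : Wh → Vh)
    (bh : Wh → ℤ) (hbh : ∀ l, bh l ≠ 0) (hbnegh : ∀ l, bh (negh l) = bh l)
    (kh : Vh → ℚ)
    -- the covering map and its local degrees
    (qV : Vh → V) (qW : Wh → W) (d : Vh → ℤ)
    (hqV_surj : Function.Surjective qV)
    (hq_neg : ∀ l, qW (negh l) = neg (qW l))
    (hq_ini : ∀ l, qV (inih l) = ini (qW l))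
    (hd_pos : ∀ u, 0 < d u)
    (hdeg : ∀ u : Vh, ∀ w : W, ini w = qV u →
      ((univ.filter (fun l => inih l = u ∧ qW l = w)).card : ℤ) = d u)
    (hk : ∀ u, kh u = k (qV u) * (d u : ℚ))
    (hbq : ∀ l, bh l = b (qW l))
    -- a real solution of the BKN-equation over X̂
    (x : Vh → ℝ) (μ : Wh → ℝ)
    (hsolh : ∀ u, ∑ l ∈ univ.filter (fun l => inih l = u),
        μ l * x (inih (negh l)) / (bh l : ℝ) = (kh u : ℝ) * x u)
    (hx_nn : ∀ u, 0 ≤ x u) (hx_ne : x ≠ 0)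
    (hμ : ∀ l, |μ l| ≤ 1) (hμsym : ∀ l, μ (negh l) = μ l) :
    ∃ (t : V → ℝ) (lam : W → ℝ),
      (∀ v, ∑ w ∈ univ.filter (fun w => ini w = v),
          lam w * t (ini (neg w)) / (b w : ℝ) = (k v : ℝ) * t v) ∧
        (∀ v, 0 ≤ t v) ∧ t ≠ 0 ∧
        (∀ w, |lam w| ≤ 1) ∧ (∀ w, lam (neg w) = lam w) ∧
        ((∀ u, 0 < x u) → ∀ v, 0 < t v) := by

  classical
  -- the fiber sums
  set T : V → ℝ := fun v => ∑ u ∈ univ.filter (fun u => qV u = v), (d u : ℝ) * x u ^ 2 with hTdef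
  set t : V → ℝ := fun v => Real.sqrt (T v) with htdef
  set S : W → ℝ := fun w => ∑ l ∈ univ.filter (fun l => qW l = w),
      μ l * x (inih l) * x (inih (negh l)) with hSdef
  set lam : W → ℝ := fun w => if t (ini w) * t (ini (neg w)) = 0 then 0
      else S w / (t (ini w) * t (ini (neg w))) with hlamdef
  have hlam_eq : ∀ w, lam w = if t (ini w) * t (ini (neg w)) = 0 then 0
      else S w / (t (ini w) * t (ini (neg w))) := fun w => rfl
  have hS_eq : ∀ w, S w = ∑ l ∈ univ.filter (fun l => qW l = w),
      μ l * x (inih l) * x (inih (negh l)) := fun w => rfl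
  have hT_eq : ∀ v, T v = ∑ u ∈ univ.filter (fun u => qV u = v), (d u : ℝ) * x u ^ 2 :=
    fun v => rfl
  have hT_nn : ∀ v, 0 ≤ T v := by
    intro v
    apply Finset.sum_nonneg
    intro u _
    have := hd_pos u
    positivity
  have ht_nn : ∀ v, 0 ≤ t v := fun v => Real.sqrt_nonneg _
  have ht_sq : ∀ v, t v ^ 2 = T v := fun v => Real.sq_sqrt (hT_nn v)
  have hT0 : ∀ v, t v = 0 → ∀ u, qV u = v → x u = 0 := by
    intro v hv u hu
    have hTv : T v = 0 := by rw [← ht_sq v, hv]; ring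
    have h0 : ∀ i ∈ univ.filter (fun u => qV u = v), 0 ≤ (d i : ℝ) * x i ^ 2 := by
      intro i _
      have := hd_pos i
      positivity
    have := (Finset.sum_eq_zero_iff_of_nonneg h0).mp hTv u (by simp [hu])
    have hd : (0:ℝ) < (d u : ℝ) := by exact_mod_cast hd_pos u
    have hx2 : x u ^ 2 = 0 := by
      by_contra h
      exact h (by nlinarith)
    exact pow_eq_zero_iff (n := 2) (by norm_num) |>.mp hx2
  -- fiber sum of squares over an edge-end
  have hfib : ∀ w : W, ∑ l ∈ univ.filter (fun l => qW l = w), x (inih l) ^ 2 = T (ini w) := by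
    intro w
    have hmaps : ∀ l ∈ univ.filter (fun l => qW l = w), inih l ∈ univ.filter (fun u => qV u = ini w) := by
      intro l hl
      simp only [mem_filter, mem_univ, true_and] at hl ⊢
      rw [hq_ini, hl]
    rw [← Finset.sum_fiberwise_of_maps_to hmaps (fun l => x (inih l) ^ 2)]
    apply Finset.sum_congr rfl
    intro u hu
    simp only [mem_filter, mem_univ, true_and] at hu
    have hcard : (((univ.filter (fun l => qW l = w)).filter (fun l => inih l = u)).card : ℤ) = d u := by
      have := hdeg u w hu.symm
      have hset : (univ.filter (fun l => qW l = w)).filter (fun l => inih l = u)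
          = univ.filter (fun l => inih l = u ∧ qW l = w) := by
        ext l; simp [and_comm]
      rw [hset]
      exact_mod_cast this
    calc ∑ l ∈ (univ.filter (fun l => qW l = w)).filter (fun l => inih l = u), x (inih l) ^ 2
        = ∑ l ∈ (univ.filter (fun l => qW l = w)).filter (fun l => inih l = u), x u ^ 2 := by
          apply Finset.sum_congr rfl
          intro l hl
          simp only [mem_filter] at hl
          rw [hl.2]
      _ = (d u : ℝ) * x u ^ 2 := by
          rw [Finset.sum_const, nsmul_eq_mul]
          congr 1
          exact_mod_cast hcard
  -- the bijection of fibers induced by the involution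
  have hbij : ∀ (w : W) (f : Wh → ℝ), ∑ l ∈ univ.filter (fun l => qW l = w), f (negh l)
      = ∑ l ∈ univ.filter (fun l => qW l = neg w), f l := by
    intro w f
    apply Finset.sum_nbij' (i := negh) (j := negh)
    · intro l hl
      simp only [mem_filter, mem_univ, true_and] at hl ⊢
      rw [hq_neg, hl]
    · intro l hl
      simp only [mem_filter, mem_univ, true_and] at hl ⊢
      rw [hq_neg, hl, hinv]
    · intro l _; exact hinvh l
    · intro l _; exact hinvh l
    · intro l _; rfl
  have hfib' : ∀ w : W, ∑ l ∈ univ.filter (fun l => qW l = w), x (inih (negh l)) ^ 2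
      = T (ini (neg w)) := by
    intro w
    rw [hbij w (fun l => x (inih l) ^ 2), hfib]
  have hS_neg : ∀ w, S (neg w) = S w := by
    intro w
    rw [hS_eq, hS_eq, ← hbij w (fun l => μ l * x (inih l) * x (inih (negh l)))]
    apply Finset.sum_congr rfl
    intro l _
    rw [hμsym, hinvh]
    ring
  have hS_bound : ∀ w, |S w| ≤ t (ini w) * t (ini (neg w)) := by
    intro w
    have h1 : |S w| ≤ ∑ l ∈ univ.filter (fun l => qW l = w), x (inih l) * x (inih (negh l)) := by
      refine (Finset.abs_sum_le_sum_abs _ _).trans (Finset.sum_le_sum ?_)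
      intro l _
      rw [abs_mul, abs_mul, abs_of_nonneg (hx_nn _), abs_of_nonneg (hx_nn _)]
      have := hμ l
      have h2 := hx_nn (inih l)
      have h3 := hx_nn (inih (negh l))
      have h4 := mul_le_mul_of_nonneg_right (mul_le_mul_of_nonneg_right (hμ l) h2) h3
      nlinarith [h4]
    have h2 : (∑ l ∈ univ.filter (fun l => qW l = w), x (inih l) * x (inih (negh l))) ^ 2
        ≤ T (ini w) * T (ini (neg w)) := by
      rw [← hfib w, ← hfib' w]
      exact Finset.sum_mul_sq_le_sq_mul_sq _ _ _
    have h3 : ∑ l ∈ univ.filter (fun l => qW l = w), x (inih l) * x (inih (negh l))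
        ≤ t (ini w) * t (ini (neg w)) := by
      have hnn : 0 ≤ t (ini w) * t (ini (neg w)) := mul_nonneg (ht_nn _) (ht_nn _)
      nlinarith [ht_sq (ini w), ht_sq (ini (neg w))]
    linarith
  have hlam_bound : ∀ w, |lam w| ≤ 1 := by
    intro w
    rw [hlam_eq]
    split_ifs with h
    · simp
    · have hpos : 0 < t (ini w) * t (ini (neg w)) :=
        lt_of_le_of_ne (mul_nonneg (ht_nn _) (ht_nn _)) (Ne.symm h)
      rw [abs_div, abs_of_pos hpos, div_le_one hpos]
      exact hS_bound w
  have hlam_sym : ∀ w, lam (neg w) = lam w := by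
    intro w
    rw [hlam_eq, hlam_eq, hinv, hS_neg, mul_comm (t (ini (neg w)))]
  have hS_zero : ∀ w, t (ini (neg w)) = 0 → S w = 0 := by
    intro w hw
    apply Finset.sum_eq_zero
    intro l hl
    simp only [mem_filter, mem_univ, true_and] at hl
    have : qV (inih (negh l)) = ini (neg w) := by rw [hq_ini, hq_neg, hl]
    rw [hT0 _ hw _ this]
    ring
  -- the main identity
  have hmain : ∀ v, ∑ w ∈ univ.filter (fun w => ini w = v), S w / (b w : ℝ)
      = (k v : ℝ) * T v := by
    intro v
    have hmaps1 : ∀ l ∈ univ.filter (fun l => qV (inih l) = v),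
        qW l ∈ univ.filter (fun w => ini w = v) := by
      intro l hl
      simp only [mem_filter, mem_univ, true_and] at hl ⊢
      rw [← hq_ini, hl]
    have hmaps2 : ∀ l ∈ univ.filter (fun l => qV (inih l) = v),
        inih l ∈ univ.filter (fun u => qV u = v) := by
      intro l hl
      simpa using hl
    calc ∑ w ∈ univ.filter (fun w => ini w = v), S w / (b w : ℝ)
        = ∑ w ∈ univ.filter (fun w => ini w = v),
            ∑ l ∈ (univ.filter (fun l => qV (inih l) = v)).filter (fun l => qW l = w),
              μ l * x (inih l) * x (inih (negh l)) / (bh l : ℝ) := by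
          apply Finset.sum_congr rfl
          intro w hw
          simp only [mem_filter, mem_univ, true_and] at hw
          have hset : (univ.filter (fun l => qV (inih l) = v)).filter (fun l => qW l = w)
              = univ.filter (fun l => qW l = w) := by
            ext l
            simp only [mem_filter, mem_univ, true_and, and_iff_right_iff_imp]
            intro h
            rw [hq_ini, h, hw]
          rw [hset, hS_eq, Finset.sum_div]
          apply Finset.sum_congr rfl
          intro l hl
          simp only [mem_filter, mem_univ, true_and] at hl
          rw [hbq, hl]
      _ = ∑ l ∈ univ.filter (fun l => qV (inih l) = v),
            μ l * x (inih l) * x (inih (negh l)) / (bh l : ℝ) :=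
          Finset.sum_fiberwise_of_maps_to hmaps1 _
      _ = ∑ u ∈ univ.filter (fun u => qV u = v),
            ∑ l ∈ (univ.filter (fun l => qV (inih l) = v)).filter (fun l => inih l = u),
              μ l * x (inih l) * x (inih (negh l)) / (bh l : ℝ) :=
          (Finset.sum_fiberwise_of_maps_to hmaps2 _).symm
      _ = ∑ u ∈ univ.filter (fun u => qV u = v), x u * ((kh u : ℝ) * x u) := by
          apply Finset.sum_congr rfl
          intro u hu
          simp only [mem_filter, mem_univ, true_and] at hu
          have hset : (univ.filter (fun l => qV (inih l) = v)).filter (fun l => inih l = u)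
              = univ.filter (fun l => inih l = u) := by
            ext l
            simp only [mem_filter, mem_univ, true_and, and_iff_right_iff_imp]
            intro h
            rw [h, hu]
          rw [hset, ← hsolh u, Finset.mul_sum]
          apply Finset.sum_congr rfl
          intro l hl
          simp only [mem_filter, mem_univ, true_and] at hl
          rw [hl]
          ring
      _ = (k v : ℝ) * T v := by
          rw [hT_eq, Finset.mul_sum]
          apply Finset.sum_congr rfl
          intro u hu
          simp only [mem_filter, mem_univ, true_and] at hu
          rw [hk u, hu]
          push_cast
          ring
  refine ⟨t, lam, ?_, ht_nn, ?_, hlam_bound, hlam_sym, ?_⟩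
  · -- BKN equation over X
    intro v
    by_cases hv : t v = 0
    · rw [hv, mul_zero]
      apply Finset.sum_eq_zero
      intro w hw
      simp only [mem_filter, mem_univ, true_and] at hw
      have : lam w = 0 := by
        rw [hlam_eq, hw, hv, zero_mul, if_pos rfl]
      rw [this]
      ring
    · have hterm : ∀ w ∈ univ.filter (fun w => ini w = v),
          lam w * t (ini (neg w)) / (b w : ℝ) = S w / (b w : ℝ) / t v := by
        intro w hw
        simp only [mem_filter, mem_univ, true_and] at hw
        by_cases hw2 : t (ini (neg w)) = 0
        · rw [hw2, hS_zero w hw2, mul_zero, zero_div, zero_div]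
        · have hne : t (ini w) * t (ini (neg w)) ≠ 0 := by
            rw [hw]
            exact mul_ne_zero hv hw2
          have hbw : (b w : ℝ) ≠ 0 := Int.cast_ne_zero.mpr (hb w)
          rw [hlam_eq, if_neg hne, hw]
          field_simp
      rw [Finset.sum_congr rfl hterm, ← Finset.sum_div, hmain v]
      rw [← ht_sq v]
      field_simp
  · -- t ≠ 0
    obtain ⟨u, hu⟩ := Function.ne_iff.mp hx_ne
    have hxu : 0 < x u := lt_of_le_of_ne (hx_nn u) (by simpa using Ne.symm hu)
    intro h
    have : x u = 0 := hT0 (qV u) (by simpa using congrFun h (qV u)) u rfl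
    exact absurd this (ne_of_gt hxu)
  · -- positivity
    intro hx v
    obtain ⟨u, hu⟩ := hqV_surj v
    have hxu := hx u
    have hdu : (0:ℝ) < (d u : ℝ) := by exact_mod_cast hd_pos u
    have hTv : 0 < T v := by
      have hmem : u ∈ univ.filter (fun u' => qV u' = v) := by simp [hu]
      have : (d u : ℝ) * x u ^ 2 ≤ T v := by
        apply Finset.single_le_sum (f := fun u' => (d u' : ℝ) * x u' ^ 2) _ hmem
        intro i _
        have := hd_pos i
        positivity
      nlinarith [mul_pos hdu (pow_pos hxu 2)]
    exact Real.sqrt_pos.mpr hTv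
end

section
/- Let X = (V, W, b, k) be a labelled graph. The following are equivalent: (1) the BKN-equation over X has a solution (a, γ) with a_v > 0 for every v ∈ V and such that γ_w = γ_{-w} = ε_{w⁻} · ε_{w⁺} for all w ∈ W, for some function ε : V → {+1, -1}; (2) the reduced plumbing matrix A of X, defined as the V×V rational matrix whose v-row evaluated on a vector x gives k_v x_v − Σ_{w ∈ ∂v} x_{w⁺} / b_w (i.e. a_{vv'} = k_v·δ_{vv'} − Σ_{w ∈ ∂v, w⁺ = v'} 1/b_w), is supersingular, meaning that A x = 0 for some vector x : V → ℚ all of whose entries are nonzero. -/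
open Finset

/-- For a labelled graph `X = (V, W, b, k)`, the BKN-equation
has a solution `(a, γ)` with `a_v > 0` for all `v` and
`γ_w = γ_{-w} = ε_{w⁻} ε_{w⁺}` for some `ε : V → {±1}` if and only if the
reduced plumbing matrix (whose `v`-row applied to `x` gives
`k_v x_v − Σ_{w ∈ ∂v} x_{w⁺} / b_w`) is supersingular, i.e. kills some vector
`x : V → ℚ` all of whose entries are nonzero. -/
theorem stmt7 {V W : Type*} [Fintype V] [Fintype W] [DecidableEq V]
    (neg : W → W) (hinv : ∀ w, neg (neg w) = w) (hfpf : ∀ w, neg w ≠ w)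
    (ini : W → V)
    (b : W → ℤ) (hb : ∀ w, b w ≠ 0) (hbneg : ∀ w, b (neg w) = b w)
    (k : V → ℚ) :
    (∃ (a : V → ℚ) (γ : W → ℚ) (ε : V → ℚ),
        (∀ v, ∑ w ∈ univ.filter (fun w => ini w = v),
            γ w * a (ini (neg w)) / (b w : ℚ) = k v * a v) ∧
          (∀ v, 0 < a v) ∧
          (∀ v, ε v = 1 ∨ ε v = -1) ∧
          (∀ w, γ w = ε (ini w) * ε (ini (neg w))) ∧
          (∀ w, γ (neg w) = γ w)) ↔
      (∃ x : V → ℚ, (∀ v, x v ≠ 0) ∧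
        ∀ v, k v * x v - ∑ w ∈ univ.filter (fun w => ini w = v),
            x (ini (neg w)) / (b w : ℚ) = 0) := by
  constructor
  · rintro ⟨a, γ, ε, heq, hpos, hε, hγ, -⟩
    have hε2 : ∀ v, ε v * ε v = 1 := by
      intro v; rcases hε v with h | h <;> rw [h] <;> norm_num
    refine ⟨fun v => ε v * a v, fun v => ?_, fun v => ?_⟩
    · simp only [ne_eq, mul_eq_zero, not_or]
      refine ⟨?_, (hpos v).ne'⟩
      rcases hε v with h | h <;> rw [h] <;> norm_num
    · have key : ∑ w ∈ univ.filter (fun w => ini w = v),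
          ε (ini (neg w)) * a (ini (neg w)) / (b w : ℚ)
          = ε v * ∑ w ∈ univ.filter (fun w => ini w = v),
            γ w * a (ini (neg w)) / (b w : ℚ) := by
        rw [Finset.mul_sum]
        refine Finset.sum_congr rfl fun w hw => ?_
        simp only [mem_filter] at hw
        rw [hγ w, hw.2,
          show ε v * (ε v * ε (ini (neg w)) * a (ini (neg w)) / (b w : ℚ))
            = (ε v * ε v) * (ε (ini (neg w)) * a (ini (neg w)) / (b w : ℚ)) from by ring,
          hε2 v, one_mul]
      rw [key, heq v]
      ring
  · rintro ⟨x, hx, heq⟩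
    refine ⟨fun v => |x v|, fun w => (if 0 < x (ini w) then 1 else -1) *
        (if 0 < x (ini (neg w)) then 1 else -1),
        fun v => if 0 < x v then 1 else -1, fun v => ?_, fun v => abs_pos.2 (hx v),
        fun v => ?_, fun w => rfl, fun w => ?_⟩
    · set ε : V → ℚ := fun v => if 0 < x v then 1 else -1 with hεdef
      have hxa : ∀ u, ε u * |x u| = x u := by
        intro u
        by_cases h : 0 < x u
        · simp [hεdef, h, abs_of_pos h]
        · have hneg : x u < 0 := (hx u).lt_of_le (not_lt.1 h)
          simp [hεdef, h, abs_of_neg hneg]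
      have hε2 : ∀ u, ε u * ε u = 1 := by
        intro u; by_cases h : 0 < x u <;> simp [hεdef, h]
      have key : ∑ w ∈ univ.filter (fun w => ini w = v),
          ε (ini w) * ε (ini (neg w)) * |x (ini (neg w))| / (b w : ℚ)
          = ε v * ∑ w ∈ univ.filter (fun w => ini w = v),
            x (ini (neg w)) / (b w : ℚ) := by
        rw [Finset.mul_sum]
        refine Finset.sum_congr rfl fun w hw => ?_
        simp only [mem_filter] at hw
        rw [hw.2, mul_assoc, hxa (ini (neg w))]
        ring
      have h1 := heq v
      have h2 : k v * x v = ∑ w ∈ univ.filter (fun w => ini w = v),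
          x (ini (neg w)) / (b w : ℚ) := by linarith
      calc ∑ w ∈ univ.filter (fun w => ini w = v),
            ε (ini w) * ε (ini (neg w)) * |x (ini (neg w))| / (b w : ℚ)
          = ε v * (k v * x v) := by rw [key, h2]
        _ = k v * |x v| := by
            have h3 : ε v * x v = |x v| := by
              by_cases h : 0 < x v
              · simp [hεdef, h, abs_of_pos h]
              · have hneg : x v < 0 := (hx v).lt_of_le (not_lt.1 h)
                simp [hεdef, h, abs_of_neg hneg]
            rw [← h3]; ring
    · by_cases h : 0 < x v <;> simp [h]
    · simp only [hinv]; ring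
end
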